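/- Let q ≥ 9 be odd and let V be an (n+1)-dimensional vector space over F_q, n+1 ≥ 5, with a nondegenerate symmetric bilinear form f of plus type. In the graph whose vertices are the nondegenerate 1-dimensional subspaces of V (of both types) and whose edges are pairs spanning an elliptic 2-dimensional subspace, every cycle of length 5 can be decomposed into cycles of length at most 4: given a 5-cycle a, b, c, d, e, there exists a vertex p on an elliptic line meeting the elliptic line cd such that a is adjacent to p, splitting the pentagon into two quadrangles. -/

import Mathlib

open Module

/-- Plus type convention for a nondegenerate symmetric bilinear form over a finite
field of odd order, via the discriminant (Gram determinant modulo squares). -/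
def BIsPlusType {F M : Type*} [Field F] [AddCommGroup M] [Module F M]
    (B : LinearMap.BilinForm F M) : Prop :=
  ∃ (d : ℕ) (b : Basis (Fin d) F M),
    if Even d then IsSquare ((-1 : F) ^ (d / 2) * (Matrix.of fun i j => B (b i) (b j)).det)
    else (IsSquare ((-1 : F) ^ (d / 2) * (Matrix.of fun i j => B (b i) (b j)).det) ↔
      IsSquare (-1 : F))

/-- A subspace `W` is an *elliptic line* for `B` if it is 2-dimensional,
nondegenerate and anisotropic. -/
def IsEllipticLine {F V : Type*} [Field F] [AddCommGroup V] [Module F V]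
    (B : LinearMap.BilinForm F V) (W : Submodule F V) : Prop :=
  finrank F W = 2 ∧ (B.restrict W).Nondegenerate ∧ ∀ v ∈ W, B v v = 0 → v = 0

/-- Adjacency in the elliptic collinearity graph: two nondegenerate vectors span an
elliptic line. -/
def EAdj {F V : Type*} [Field F] [AddCommGroup V] [Module F V]
    (B : LinearMap.BilinForm F V) (u v : V) : Prop :=
  IsEllipticLine B (Submodule.span F {u, v})

section SquareFacts

variable {F : Type*} [Field F]

lemma sq_mul_nonsquare {r m : F} (hr : r ≠ 0) (hm : ¬ IsSquare m) :
    ¬ IsSquare (r ^ 2 * m) := by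
  rintro ⟨z, hz⟩
  exact hm ⟨z / r, by field_simp; linear_combination hz⟩

lemma nonsquare_of_mul_eq_one {x y : F} (h : x * y = 1) (hx : ¬ IsSquare x) :
    ¬ IsSquare y := by
  rintro ⟨z, hz⟩
  have hz0 : z ≠ 0 := by rintro rfl; rw [hz] at h; simp at h
  rw [hz] at h
  exact hx ⟨z⁻¹, by field_simp; linear_combination h⟩

variable [Fintype F]

lemma char_ne_two_of_odd_card (hodd : Odd (Fintype.card F)) : ringChar F ≠ 2 := by
  intro h
  have h2 := FiniteField.even_card_iff_char_two.mp h
  obtain ⟨m, hm⟩ := hodd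
  omega

lemma two_ne_zero_of_char_ne_two (hchar : ringChar F ≠ 2) : (2 : F) ≠ 0 := by
  intro h
  have hdvd : ringChar F ∣ 2 :=
    (CharP.cast_eq_zero_iff F (ringChar F) 2).mp (by exact_mod_cast h)
  have hp : (ringChar F).Prime := CharP.char_is_prime F (ringChar F)
  rcases (Nat.dvd_prime Nat.prime_two).mp hdvd with h1 | h2
  · exact hp.ne_one h1
  · exact hchar h2

lemma three_nonsquares (hq : 9 ≤ Fintype.card F) (hchar : ringChar F ≠ 2) :
    ∃ n₁ n₂ n₃ : F, ¬ IsSquare n₁ ∧ ¬ IsSquare n₂ ∧ ¬ IsSquare n₃ ∧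
      n₁ ≠ n₂ ∧ n₁ ≠ n₃ ∧ n₂ ≠ n₃ := by
  classical
  obtain ⟨n, hn⟩ := FiniteField.exists_nonsquare (F := F) hchar
  have hn0 : n ≠ 0 := by rintro rfl; exact hn (by simp)
  obtain ⟨g, hg⟩ := IsCyclic.exists_generator (α := Fˣ)
  have horder : orderOf g = Fintype.card F - 1 := by
    rw [orderOf_eq_card_of_forall_mem_zpowers hg, Nat.card_eq_fintype_card,
      Fintype.card_units]
  set c : F := (g : F) with hc
  have hc0 : c ≠ 0 := Units.ne_zero g
  have hg4 : c ^ 4 ≠ 1 := by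
    intro h
    have h4 : g ^ 4 = 1 := by ext; push_cast; exact h
    have := orderOf_le_of_pow_eq_one (by norm_num) h4
    omega
  have hc2 : c ^ 2 ≠ 1 := by
    intro h; apply hg4
    have : (c ^ 2) ^ 2 = 1 := by rw [h]; ring
    calc c ^ 4 = (c ^ 2) ^ 2 := by ring
    _ = 1 := this
  have hcc0 : c ^ 2 ≠ 0 := pow_ne_zero 2 hc0
  refine ⟨n, n * c ^ 2, n * c ^ 4, hn, ?_, ?_, ?_, ?_, ?_⟩
  · exact fun h => sq_mul_nonsquare hc0 hn (by rwa [mul_comm] at h)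
  · have e : n * c ^ 4 = (c ^ 2) ^ 2 * n := by ring
    rw [e]
    exact sq_mul_nonsquare hcc0 hn
  · intro h
    have h' : n * 1 = n * c ^ 2 := by rw [mul_one]; exact h
    exact hc2 (mul_left_cancel₀ hn0 h').symm
  · intro h
    have h' : n * 1 = n * c ^ 4 := by rw [mul_one]; exact h
    exact hg4 (mul_left_cancel₀ hn0 h').symm
  · intro h
    have h' : n * c ^ 2 * 1 = n * c ^ 2 * c ^ 2 := by rw [mul_one]; linear_combination h
    exact hc2 (mul_left_cancel₀ (mul_ne_zero hn0 hcc0) h').symm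

end SquareFacts

section Quad

variable {F : Type*} [Field F] [Fintype F]

/-- Construction B: if `u` is a nonsquare and `-(k/u)` is a nonsquare, then
`u s^2 + k` takes nonsquare values at two distinct points. -/
lemma conB (hq : 9 ≤ Fintype.card F) (h2 : (2 : F) ≠ 0) {u k : F}
    (hu : ¬ IsSquare u) (hk : ¬ IsSquare (-(k / u))) :
    ∃ s₁ s₂ : F, s₁ ≠ s₂ ∧ ¬ IsSquare (u * s₁ ^ 2 + k) ∧ ¬ IsSquare (u * s₂ ^ 2 + k) := by
  classical
  have hu0 : u ≠ 0 := by rintro rfl; simp at hk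
  have hk0 : k ≠ 0 := by rintro rfl; simp at hk
  set P : F → F := fun l => (k / (u * l) - l) / 2 with hP
  set M : F → F := fun l => (k / (u * l) + l) / 2 with hM
  have key : ∀ l : F, l ≠ 0 → u * (P l) ^ 2 + k = u * (M l) ^ 2 := by
    intro l hl
    rw [hP, hM]
    field_simp
    ring
  have good : ∀ l : F, l ≠ 0 → ¬ IsSquare (u * (P l) ^ 2 + k) := by
    intro l hl
    rw [key l hl]
    have hMl : M l ≠ 0 := by
      intro h0
      apply hk
      have hPk : u * (P l) ^ 2 + k = 0 := by rw [key l hl, h0]; ring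
      refine ⟨P l, ?_⟩
      field_simp
      linear_combination -hPk
    intro hsq
    apply hu
    obtain ⟨z, hz⟩ := hsq
    exact ⟨z / M l, by field_simp; linear_combination hz⟩
  -- pick two parameters giving distinct points
  obtain ⟨l2, hl2⟩ : ∃ x : F, x ∉ ({0, 1, -(k / u)} : Finset F) := by
    have hcard : (({0, 1, -(k / u)} : Finset F)).card < Fintype.card F := by
      calc (({0, 1, -(k / u)} : Finset F)).card ≤ 3 := by
            apply le_trans (Finset.card_insert_le _ _)
            apply Nat.succ_le_succ
            apply le_trans (Finset.card_insert_le _ _)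
            simp
      _ < Fintype.card F := by omega
    by_contra hall
    push_neg at hall
    have : (Finset.univ : Finset F) ⊆ ({0, 1, -(k / u)} : Finset F) :=
      fun x _ => hall x
    have := Finset.card_le_card this
    rw [Finset.card_univ] at this
    omega
  simp only [Finset.mem_insert, Finset.mem_singleton] at hl2
  push_neg at hl2
  obtain ⟨hl20, hl21, hl2k⟩ := hl2
  refine ⟨P 1, P l2, ?_, good 1 one_ne_zero, good l2 hl20⟩
  intro hPe
  rw [hP] at hPe
  simp only at hPe
  have hne : (l2 - 1) * (k + u * l2) = 0 := by
    have h1 : (k / (u * 1) - 1) / 2 = (k / (u * l2) - l2) / 2 := hPe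
    field_simp at h1
    have h3 : (2 * u) * ((l2 - 1) * (k + u * l2)) = 0 := by linear_combination (2 * u) * h1
    rcases mul_eq_zero.mp h3 with h' | h'
    · exact absurd h' (mul_ne_zero h2 hu0)
    · exact h'
  rcases mul_eq_zero.mp hne with h | h
  · exact hl21 (by linear_combination h)
  · apply hl2k
    field_simp
    linear_combination h

/-- The main quadratic-values lemma: a quadratic polynomial with nonzero
discriminant takes a nonsquare value at some nonzero point. -/
lemma exists_nonzero_nonsquare_value (hq : 9 ≤ Fintype.card F)
    (hchar : ringChar F ≠ 2) {u v w : F} (hdisc : v ^ 2 - 4 * (u * w) ≠ 0) :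
    ∃ t : F, t ≠ 0 ∧ ¬ IsSquare (u * t ^ 2 + v * t + w) := by
  classical
  have h2 : (2 : F) ≠ 0 := two_ne_zero_of_char_ne_two hchar
  suffices h : ∃ t₁ t₂ : F, t₁ ≠ t₂ ∧ ¬ IsSquare (u * t₁ ^ 2 + v * t₁ + w) ∧
      ¬ IsSquare (u * t₂ ^ 2 + v * t₂ + w) by
    obtain ⟨t₁, t₂, hne, h1, h2'⟩ := h
    by_cases h0 : t₁ = 0
    · exact ⟨t₂, fun h => hne (by rw [h0, h]), h2'⟩
    · exact ⟨t₁, h0, h1⟩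
  by_cases hu : u = 0
  · have hv : v ≠ 0 := by
      intro h; apply hdisc; rw [hu, h]; ring
    obtain ⟨n₁, n₂, n₃, hn₁, hn₂, hn₃, h12, h13, h23⟩ := three_nonsquares hq hchar
    refine ⟨(n₁ - w) / v, (n₂ - w) / v, ?_, ?_, ?_⟩
    · intro h; apply h12; field_simp at h; linear_combination h
    · have : u * ((n₁ - w) / v) ^ 2 + v * ((n₁ - w) / v) + w = n₁ := by
        rw [hu]; field_simp; ring
      rwa [this]
    · have : u * ((n₂ - w) / v) ^ 2 + v * ((n₂ - w) / v) + w = n₂ := by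
        rw [hu]; field_simp; ring
      rwa [this]
  · -- complete the square
    set k : F := w - v ^ 2 / (4 * u) with hkdef
    have h4 : (4 : F) ≠ 0 := by
      intro h; apply h2
      have : (2 : F) * 2 = 0 := by linear_combination h
      rcases mul_eq_zero.mp this with h' | h' <;> exact h'
    have hk0 : k ≠ 0 := by
      rw [hkdef]
      intro h
      apply hdisc
      field_simp at h
      linear_combination -h
    have key : ∀ s : F, u * (s - v / (2 * u)) ^ 2 + v * (s - v / (2 * u)) + w
        = u * s ^ 2 + k := by
      intro s; rw [hkdef]; field_simp; ring
    suffices h : ∃ s₁ s₂ : F, s₁ ≠ s₂ ∧ ¬ IsSquare (u * s₁ ^ 2 + k) ∧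
        ¬ IsSquare (u * s₂ ^ 2 + k) by
      obtain ⟨s₁, s₂, hne, h1, h2'⟩ := h
      refine ⟨s₁ - v / (2 * u), s₂ - v / (2 * u), ?_, ?_, ?_⟩
      · intro h; apply hne; linear_combination h
      · rw [key]; exact h1
      · rw [key]; exact h2'
    by_cases hsq : IsSquare (-(k / u))
    · -- the quadratic has roots ±a : factorization construction
      obtain ⟨a, ha⟩ := hsq
      have ha0 : a ≠ 0 := by
        rintro rfl
        rw [mul_zero] at ha
        rcases div_eq_zero_iff.mp (neg_eq_zero.mp ha) with h' | h'
        · exact hk0 h'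
        · exact hu h'
      have hfact : k = -(u * (a * a)) := by
        field_simp at ha
        linear_combination -ha
      obtain ⟨n₁, n₂, n₃, hn₁, hn₂, hn₃, h12, h13, h23⟩ := three_nonsquares hq hchar
      -- choose two nonsquares different from u
      obtain ⟨m₁, m₂, hm₁, hm₂, hmne, hm₁u, hm₂u⟩ :
          ∃ m₁ m₂ : F, ¬ IsSquare m₁ ∧ ¬ IsSquare m₂ ∧ m₁ ≠ m₂ ∧ m₁ ≠ u ∧ m₂ ≠ u := by
        by_cases e1 : n₁ = u
        · exact ⟨n₂, n₃, hn₂, hn₃, h23, by rw [← e1]; exact h12.symm,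
            by rw [← e1]; exact h13.symm⟩
        · by_cases e2 : n₂ = u
          · exact ⟨n₁, n₃, hn₁, hn₃, h13, e1, by rw [← e2]; exact h23.symm⟩
          · exact ⟨n₁, n₂, hn₁, hn₂, h12, e1, e2⟩
      have hm₁0 : m₁ ≠ 0 := by rintro rfl; exact hm₁ (by simp)
      have hm₂0 : m₂ ≠ 0 := by rintro rfl; exact hm₂ (by simp)
      set sOf : F → F := fun m => a + 2 * a / (m / u - 1) with hsOf
      have hyne : ∀ m : F, m ≠ u → m / u - 1 ≠ 0 := by
        intro m hmu h
        apply hmu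
        have : m / u = 1 := by linear_combination h
        field_simp at this
        exact this
      have hval : ∀ m : F, ¬ IsSquare m → m ≠ 0 → m ≠ u →
          ¬ IsSquare (u * (sOf m) ^ 2 + k) := by
        intro m hm hm0 hmu
        have hy1 : m / u - 1 ≠ 0 := hyne m hmu
        have hr0 : 2 * a / (m / u - 1) ≠ 0 :=
          div_ne_zero (by exact mul_ne_zero h2 ha0) hy1
        have hm' : m = u * (m / u) := by field_simp
        have hkey : u * (sOf m) ^ 2 + k = (2 * a / (m / u - 1)) ^ 2 * m := by
          rw [hsOf]
          simp only
          rw [hfact]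
          rw [hm']
          generalize hyy : m / u = yy at hy1 ⊢
          field_simp
          ring
        rw [hkey]
        exact sq_mul_nonsquare hr0 hm
      refine ⟨sOf m₁, sOf m₂, ?_, hval m₁ hm₁ hm₁0 hm₁u, hval m₂ hm₂ hm₂0 hm₂u⟩
      intro h
      rw [hsOf] at h
      simp only at h
      apply hmne
      have hy1 : m₁ / u - 1 ≠ 0 := hyne m₁ hm₁u
      have hy2 : m₂ / u - 1 ≠ 0 := hyne m₂ hm₂u
      have h2a : 2 * a ≠ 0 := mul_ne_zero h2 ha0
      have h' : 2 * a / (m₁ / u - 1) = 2 * a / (m₂ / u - 1) := by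
        linear_combination h
      rw [div_eq_div_iff hy1 hy2] at h'
      have h4 : m₂ / u - 1 = m₁ / u - 1 :=
        mul_left_cancel₀ h2a h'
      have h5 : m₁ / u = m₂ / u := by linear_combination -h4
      field_simp at h5
      exact h5
    · by_cases hub : IsSquare u
      · obtain ⟨e, he⟩ := hub
        have he0 : e ≠ 0 := by rintro rfl; rw [he] at hu; simp at hu
        by_cases hkk : IsSquare k
        · -- u, k squares; -(k/u) nonsquare forces -1 nonsquare; use sum of two squares
          obtain ⟨g, hg⟩ := hkk
          have hg0 : g ≠ 0 := by rintro rfl; rw [hg] at hk0; simp at hk0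
          obtain ⟨nn, hnn⟩ := FiniteField.exists_nonsquare (F := F) hchar
          obtain ⟨x, y, hxy⟩ : ∃ x y : F, x ^ 2 + y ^ 2 = nn := by
            have hodd := FiniteField.odd_card_of_char_ne_two (F := F) hchar
            obtain ⟨x, y, h⟩ := FiniteField.exists_root_sum_quadratic
              (f := Polynomial.X ^ 2 + Polynomial.C (-nn)) (g := Polynomial.X ^ 2)
              (by compute_degree!) (by compute_degree!) hodd
            refine ⟨x, y, ?_⟩
            simp [Polynomial.eval_add, Polynomial.eval_pow] at h
            linear_combination h
          have hy0 : y ≠ 0 := by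
            rintro rfl
            exact hnn ⟨x, by linear_combination -hxy⟩
          have hx0 : x ≠ 0 := by
            rintro rfl
            exact hnn ⟨y, by linear_combination -hxy⟩
          set s : F := g * x / (e * y) with hs
          have hs0 : s ≠ 0 := by
            rw [hs]
            exact div_ne_zero (mul_ne_zero hg0 hx0) (mul_ne_zero he0 hy0)
          have hvals : u * s ^ 2 + k = (g / y) ^ 2 * nn := by
            rw [hs, he, hg]
            field_simp
            linear_combination hxy
          refine ⟨s, -s, ?_, ?_, ?_⟩
          · intro h
            apply hs0
            have : (2 : F) * s = 0 := by linear_combination h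
            rcases mul_eq_zero.mp this with h' | h'
            · exact absurd h' h2
            · exact h'
          · rw [hvals]; exact sq_mul_nonsquare (div_ne_zero hg0 hy0) hnn
          · have : u * (-s) ^ 2 + k = (g / y) ^ 2 * nn := by rw [← hvals]; ring_nf
            rw [this]; exact sq_mul_nonsquare (div_ne_zero hg0 hy0) hnn
        · -- u square, k nonsquare: apply conB to (k, u) and invert
          have hrec : ¬ IsSquare (-(u / k)) := by
            apply nonsquare_of_mul_eq_one (x := -(k / u)) _ hsq
            field_simp
          obtain ⟨σ₁, σ₂, hσne, H1, H2⟩ := conB hq h2 hkk hrec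
          have hσ₁0 : σ₁ ≠ 0 := by
            rintro rfl; apply H1; rw [show k * (0:F)^2 + u = u by ring]; exact ⟨e, he⟩
          have hσ₂0 : σ₂ ≠ 0 := by
            rintro rfl; apply H2; rw [show k * (0:F)^2 + u = u by ring]; exact ⟨e, he⟩
          refine ⟨σ₁⁻¹, σ₂⁻¹, ?_, ?_, ?_⟩
          · intro h; exact hσne (inv_injective h)
          · have : u * (σ₁⁻¹) ^ 2 + k = (σ₁⁻¹) ^ 2 * (k * σ₁ ^ 2 + u) := by
              field_simp; ring
            rw [this]; exact sq_mul_nonsquare (inv_ne_zero hσ₁0) H1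
          · have : u * (σ₂⁻¹) ^ 2 + k = (σ₂⁻¹) ^ 2 * (k * σ₂ ^ 2 + u) := by
              field_simp; ring
            rw [this]; exact sq_mul_nonsquare (inv_ne_zero hσ₂0) H2
      · exact conB hq h2 hub hsq

end Quad
section Geom

variable {F V : Type*} [Field F] [AddCommGroup V] [Module F V]
variable (B : LinearMap.BilinForm F V)

lemma bilin_expand (hsymm : B.IsSymm) (s t : F) (x y : V) :
    B (s • x + t • y) (s • x + t • y)
      = s ^ 2 * B x x + 2 * (s * t) * B x y + t ^ 2 * B y y := by
  have h : B y x = B x y := by simpa using hsymm.eq y x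
  simp only [map_add, map_smul, LinearMap.add_apply, LinearMap.smul_apply, smul_eq_mul]
  rw [h]; ring

lemma nonsquare_of_pair_elliptic (hsymm : B.IsSymm) {L : Submodule F V}
    (hL : IsEllipticLine B L) {x y : V} (hx : x ∈ L) (hy : y ∈ L) (hx0 : x ≠ 0)
    (hind : ∀ s : F, y ≠ s • x) :
    ¬ IsSquare ((B x y) ^ 2 - B x x * B y y) := by
  rintro ⟨m, hm⟩
  have hQx : B x x ≠ 0 := fun h => hx0 (hL.2.2 x hx h)
  set lam : F := (m - B x y) / (B x x) with hlam
  have hmem : lam • x + (1 : F) • y ∈ L := by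
    exact Submodule.add_mem _ (Submodule.smul_mem _ _ hx) (Submodule.smul_mem _ _ hy)
  have hl : lam * B x x = m - B x y := by rw [hlam]; field_simp
  have hQz : B x x * B (lam • x + (1 : F) • y) (lam • x + (1 : F) • y) = 0 := by
    rw [bilin_expand B hsymm lam 1 x y]
    linear_combination (lam * B x x + m + B x y) * hl - hm
  have hz := hL.2.2 _ hmem (by
    rcases mul_eq_zero.mp hQz with h | h
    · exact absurd h hQx
    · exact h)
  apply hind (-lam)
  have : (1 : F) • y = -(lam • x) := by
    rw [eq_neg_iff_add_eq_zero, add_comm]; exact hz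
  rw [one_smul] at this
  rw [this, ← neg_smul]

lemma isEllipticLine_span_pair (hsymm : B.IsSymm) {a p : V} (ha : B a a ≠ 0)
    (hD : ¬ IsSquare ((B a p) ^ 2 - B a a * B p p)) :
    IsEllipticLine B (Submodule.span F {a, p}) := by
  have hD0 : (B a p) ^ 2 - B a a * B p p ≠ 0 := by
    intro h; exact hD (h ▸ ⟨0, by ring⟩)
  have ha0 : a ≠ 0 := by rintro rfl; simp at ha
  have hp0 : p ≠ 0 := by rintro rfl; simp at hD0
  have hind : ∀ s : F, p ≠ s • a := by
    intro s hs
    apply hD0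
    rw [hs]
    simp only [map_smul, LinearMap.smul_apply, smul_eq_mul]
    ring
  have hli : LinearIndependent F ![a, p] := (LinearIndependent.pair_iff' ha0).mpr (fun s h => hind s h.symm)
  have hanis : ∀ v ∈ Submodule.span F {a, p}, B v v = 0 → v = 0 := by
    intro v hv h0
    obtain ⟨s, t, rfl⟩ := Submodule.mem_span_pair.mp hv
    rw [bilin_expand B hsymm s t a p] at h0
    by_cases ht : t = 0
    · subst ht
      have hs : s = 0 := by
        by_contra hs
        apply ha
        have h2 : s ^ 2 * B a a = 0 := by linear_combination h0
        rcases mul_eq_zero.mp h2 with h' | h'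
        · exact absurd h' (pow_ne_zero _ hs)
        · exact absurd h' (by assumption)
      simp [hs]
    · exfalso
      apply hD
      refine ⟨(s * B a a + t * B a p) / t, ?_⟩
      field_simp
      linear_combination (-(B a a)) * h0
  refine ⟨?_, ?_, hanis⟩
  · have hset : ({a, p} : Set V) = Set.range ![a, p] :=
      (Matrix.range_cons_cons_empty a p ![]).symm
    rw [hset, finrank_span_eq_card hli]
    simp
  · constructor
    · intro x hx
      have h1 : B (x : V) (x : V) = 0 := by
        have := hx x
        simpa [LinearMap.BilinForm.restrict_apply] using this
      exact Subtype.ext (hanis x.1 x.2 h1)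
    · intro x hx
      have h1 : B (x : V) (x : V) = 0 := by
        have := hx x
        simpa [LinearMap.BilinForm.restrict_apply] using this
      exact Subtype.ext (hanis x.1 x.2 h1)

lemma span_pair_add_smul_left (c d : V) {t : F} (ht : t ≠ 0) :
    Submodule.span F {c + t • d, c} = Submodule.span F {c, d} := by
  have hcd1 : c ∈ Submodule.span F {c, d} := Submodule.subset_span (by simp)
  have hcd2 : d ∈ Submodule.span F {c, d} := Submodule.subset_span (by simp)
  have h1 : c + t • d ∈ Submodule.span F {c, d} :=
    Submodule.add_mem _ hcd1 (Submodule.smul_mem _ _ hcd2)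
  apply le_antisymm
  · rw [Submodule.span_le]
    rintro x hx
    rcases hx with h | h
    · rw [h]; exact h1
    · rw [Set.mem_singleton_iff] at h; rw [h]; exact hcd1
  · rw [Submodule.span_le]
    have e1 : c + t • d ∈ Submodule.span F {c + t • d, c} :=
      Submodule.subset_span (by simp)
    have e2 : c ∈ Submodule.span F {c + t • d, c} :=
      Submodule.subset_span (by simp)
    rintro x hx
    rcases hx with h | h
    · rw [h]; exact e2
    · rw [Set.mem_singleton_iff] at h
      rw [h]
      have hmem : t⁻¹ • ((c + t • d) - c) ∈ Submodule.span F {c + t • d, c} :=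
        Submodule.smul_mem _ _ (Submodule.sub_mem _ e1 e2)
      rwa [add_sub_cancel_left, smul_smul, inv_mul_cancel₀ ht, one_smul] at hmem

lemma span_pair_add_smul_right (c d : V) {t : F} (ht : t ≠ 0) :
    Submodule.span F {c + t • d, d} = Submodule.span F {c, d} := by
  have hcd1 : c ∈ Submodule.span F {c, d} := Submodule.subset_span (by simp)
  have hcd2 : d ∈ Submodule.span F {c, d} := Submodule.subset_span (by simp)
  have h1 : c + t • d ∈ Submodule.span F {c, d} :=
    Submodule.add_mem _ hcd1 (Submodule.smul_mem _ _ hcd2)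
  apply le_antisymm
  · rw [Submodule.span_le]
    rintro x hx
    rcases hx with h | h
    · rw [h]; exact h1
    · rw [Set.mem_singleton_iff] at h; rw [h]; exact hcd2
  · rw [Submodule.span_le]
    have e1 : c + t • d ∈ Submodule.span F {c + t • d, d} :=
      Submodule.subset_span (by simp)
    have e2 : d ∈ Submodule.span F {c + t • d, d} :=
      Submodule.subset_span (by simp)
    rintro x hx
    rcases hx with h | h
    · rw [h]
      have hmem : (c + t • d) - t • d ∈ Submodule.span F {c + t • d, d} :=
        Submodule.sub_mem _ e1 (Submodule.smul_mem _ _ e2)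
      rwa [add_sub_cancel_right] at hmem
    · rw [Set.mem_singleton_iff] at h; rw [h]; exact e2

end Geom

section Main

open Module Submodule

variable {F V : Type*} [Field F] [Fintype F] [AddCommGroup V] [Module F V]

lemma not_smul_of_finrank_two {x y : V}
    (h2 : finrank F (Submodule.span F ({x, y} : Set V)) = 2) (s : F) : y ≠ s • x := by
  intro hs
  have hyx : y ∈ Submodule.span F ({x} : Set V) := by
    rw [hs]; exact Submodule.smul_mem _ _ (Submodule.subset_span rfl)
  have hsp : Submodule.span F ({x, y} : Set V) = Submodule.span F {x} := by
    rw [Set.pair_comm, Submodule.span_insert_eq_span hyx]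
  rw [hsp] at h2
  by_cases hx : x = 0
  · rw [hx, Submodule.span_zero_singleton] at h2
    rw [finrank_bot] at h2
    exact absurd h2 (by norm_num)
  · rw [finrank_span_singleton hx] at h2
    exact absurd h2 (by norm_num)

end Main

/-- Let `q ≥ 9` be odd and `V` an `(n+1)`-dimensional space over `F_q`, `n+1 ≥ 5`,
with a nondegenerate symmetric bilinear form of plus type.  In the graph on
nondegenerate points with adjacency "spanning an elliptic line", every pentagon
decomposes into two quadrangles: given a 5-cycle `a, b, c, d, e`, there is a vertex
`p` on the elliptic line `cd` adjacent to `a` (and to `c` and to `d`). -/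
theorem pentagon_decomposes_into_quadrangles
    {F V : Type*} [Field F] [Fintype F] [AddCommGroup V] [Module F V]
    (q : ℕ) (hq : Fintype.card F = q) (hodd : Odd q) (hq9 : 9 ≤ q)
    (n : ℕ) (hn : 5 ≤ n + 1) (hdim : finrank F V = n + 1)
    (B : LinearMap.BilinForm F V) (hsymm : B.IsSymm) (hB : B.Nondegenerate)
    (hplus : BIsPlusType B)
    (a b c d e : V)
    (ha : B a a ≠ 0) (hb : B b b ≠ 0) (hc : B c c ≠ 0) (hd : B d d ≠ 0)
    (he : B e e ≠ 0)
    (hab : EAdj B a b) (hbc : EAdj B b c) (hcd : EAdj B c d)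
    (hde : EAdj B d e) (hea : EAdj B e a) :
    ∃ p : V, B p p ≠ 0 ∧ p ∈ Submodule.span F {c, d} ∧
      EAdj B a p ∧ EAdj B p c ∧ EAdj B p d := by
  classical
  have hrank2 : finrank F (Submodule.span F ({c, d} : Set V)) = 2 := hcd.1
  have hanisL : ∀ v ∈ Submodule.span F ({c, d} : Set V), B v v = 0 → v = 0 := hcd.2.2
  have hcL : c ∈ Submodule.span F ({c, d} : Set V) := Submodule.subset_span (by simp)
  have hdL : d ∈ Submodule.span F ({c, d} : Set V) := Submodule.subset_span (by simp)
  have hc0 : c ≠ 0 := by rintro rfl; simp at hc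
  have hd0 : d ≠ 0 := by rintro rfl; simp at hd
  have ha0 : a ≠ 0 := by rintro rfl; simp at ha
  have hchar : ringChar F ≠ 2 := char_ne_two_of_odd_card (by rw [hq]; exact hodd)
  have h2F : (2 : F) ≠ 0 := two_ne_zero_of_char_ne_two hchar
  have hq9' : 9 ≤ Fintype.card F := by rw [hq]; exact hq9
  have hindcd : ∀ s : F, d ≠ s • c := not_smul_of_finrank_two hrank2
  have hinddc : ∀ s : F, c ≠ s • d :=
    not_smul_of_finrank_two (by rw [Set.pair_comm]; exact hrank2)
  have memL : ∀ t : F, c + t • d ∈ Submodule.span F ({c, d} : Set V) := fun t =>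
    Submodule.add_mem _ hcL (Submodule.smul_mem _ _ hdL)
  -- the common final step
  have finish : ∀ t : F, t ≠ 0 →
      ¬ IsSquare ((B a (c + t • d)) ^ 2 - B a a * B (c + t • d) (c + t • d)) →
      ∃ p : V, B p p ≠ 0 ∧ p ∈ Submodule.span F {c, d} ∧
        EAdj B a p ∧ EAdj B p c ∧ EAdj B p d := by
    intro t ht hD
    refine ⟨c + t • d, ?_, memL t, ?_, ?_, ?_⟩
    · intro h0
      have hz := hanisL _ (memL t) h0
      exact hinddc (-t) (by rw [neg_smul]; exact eq_neg_of_add_eq_zero_left hz)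
    · exact isEllipticLine_span_pair B hsymm ha hD
    · show IsEllipticLine B (Submodule.span F {c + t • d, c})
      rw [span_pair_add_smul_left c d ht]; exact hcd
    · show IsEllipticLine B (Submodule.span F {c + t • d, d})
      rw [span_pair_add_smul_right c d ht]; exact hcd
  -- choice of a parameter t ∈ {1, -1} avoiding a given direction
  have keyz : ∀ z : V, (∀ s : F, c + (1 : F) • d ≠ s • z) ∨
      (∀ s : F, c + (-1 : F) • d ≠ s • z) := by
    intro z
    by_contra hcon
    push_neg at hcon
    obtain ⟨⟨s₁, hs₁⟩, ⟨s₂, hs₂⟩⟩ := hcon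
    have hc2 : (2 : F) • c = (s₁ + s₂) • z := by
      calc (2 : F) • c = (c + (1 : F) • d) + (c + (-1 : F) • d) := by module
      _ = s₁ • z + s₂ • z := by rw [hs₁, hs₂]
      _ = (s₁ + s₂) • z := by module
    have hd2 : (2 : F) • d = (s₁ - s₂) • z := by
      calc (2 : F) • d = (c + (1 : F) • d) - (c + (-1 : F) • d) := by module
      _ = s₁ • z - s₂ • z := by rw [hs₁, hs₂]
      _ = (s₁ - s₂) • z := by module
    have hcz : c = ((2 : F)⁻¹ * (s₁ + s₂)) • z := by
      rw [← smul_smul]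
      rw [← hc2, smul_smul, inv_mul_cancel₀ h2F, one_smul]
    have hdz : d = ((2 : F)⁻¹ * (s₁ - s₂)) • z := by
      rw [← smul_smul]
      rw [← hd2, smul_smul, inv_mul_cancel₀ h2F, one_smul]
    have hmu : (2 : F)⁻¹ * (s₁ + s₂) ≠ 0 := by
      intro h; rw [h, zero_smul] at hcz; exact hc0 hcz
    have hzc : z = ((2 : F)⁻¹ * (s₁ + s₂))⁻¹ • c := by
      rw [hcz, smul_smul, inv_mul_cancel₀ hmu, one_smul]
    exact hindcd (((2 : F)⁻¹ * (s₁ - s₂)) * ((2 : F)⁻¹ * (s₁ + s₂))⁻¹)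
      (by rw [hdz, hzc, smul_smul])
  by_cases hmem : a ∈ Submodule.span F ({c, d} : Set V)
  · -- a lies on the line cd
    rcases keyz a with hk | hk
    · exact finish 1 one_ne_zero
        (nonsquare_of_pair_elliptic B hsymm hcd hmem (memL 1) ha0 hk)
    · exact finish (-1) (neg_ne_zero.mpr one_ne_zero)
        (nonsquare_of_pair_elliptic B hsymm hcd hmem (memL (-1)) ha0 hk)
  · -- a off the line cd
    have hca : B c a = B a c := by simpa using hsymm.eq c a
    have hda : B d a = B a d := by simpa using hsymm.eq d a
    have hdc : B d c = B c d := by simpa using hsymm.eq d c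
    set u : F := (B a d) ^ 2 - B a a * B d d with hu
    set vv : F := 2 * (B a c * B a d - B a a * B c d) with hvv
    set w : F := (B a c) ^ 2 - B a a * B c c with hw
    have hpoly : ∀ t : F, (B a (c + t • d)) ^ 2 - B a a * B (c + t • d) (c + t • d)
        = u * t ^ 2 + vv * t + w := by
      intro t
      simp only [map_add, map_smul, LinearMap.add_apply, LinearMap.smul_apply,
        smul_eq_mul, hu, hvv, hw]
      rw [hdc]
      ring
    by_cases hdisc : vv ^ 2 - 4 * (u * w) ≠ 0
    · obtain ⟨t, ht0, hns⟩ := exists_nonzero_nonsquare_value hq9' hchar hdisc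
      exact finish t ht0 (by rw [hpoly]; exact hns)
    · push_neg at hdisc
      set G : Matrix (Fin 3) (Fin 3) F :=
        Matrix.of ![![B a a, B a c, B a d], ![B a c, B c c, B c d], ![B a d, B c d, B d d]]
        with hG
      have hdet : G.det = 0 := by
        have hid : (-(4 * B a a)) * G.det = vv ^ 2 - 4 * (u * w) := by
          rw [Matrix.det_fin_three, hG, hu, hvv, hw]
          norm_num [Matrix.of_apply, Matrix.cons_val_zero, Matrix.cons_val_one,
            Matrix.head_cons, Matrix.cons_val_two, Matrix.tail_cons]
          ring
        rw [hdisc] at hid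
        have h4A : (-(4 * B a a)) ≠ 0 := by
          intro h
          apply ha
          have h4 : (4 : F) ≠ 0 := by
            intro h'
            apply h2F
            have : (2 : F) * 2 = 0 := by linear_combination h'
            rcases mul_eq_zero.mp this with h'' | h'' <;> exact h''
          have := neg_eq_zero.mp h
          rcases mul_eq_zero.mp this with h'' | h''
          · exact absurd h'' h4
          · exact h''
        rcases mul_eq_zero.mp hid with h' | h'
        · exact absurd h' h4A
        · exact h'
      obtain ⟨ρ, hρ0, hρ⟩ := Matrix.exists_vecMul_eq_zero_iff.mpr hdet
      set r : V := ρ 0 • a + ρ 1 • c + ρ 2 • d with hr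
      have e0 := congrFun hρ 0
      have e1 := congrFun hρ 1
      have e2 := congrFun hρ 2
      have hG00 : G 0 0 = B a a := by rw [hG]; rfl
      have hG01 : G 0 1 = B a c := by rw [hG]; rfl
      have hG02 : G 0 2 = B a d := by rw [hG]; rfl
      have hG10 : G 1 0 = B a c := by rw [hG]; rfl
      have hG11 : G 1 1 = B c c := by rw [hG]; rfl
      have hG12 : G 1 2 = B c d := by rw [hG]; rfl
      have hG20 : G 2 0 = B a d := by rw [hG]; rfl
      have hG21 : G 2 1 = B c d := by rw [hG]; rfl
      have hG22 : G 2 2 = B d d := by rw [hG]; rfl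
      simp only [Matrix.vecMul, dotProduct, Fin.sum_univ_three, Pi.zero_apply]
        at e0 e1 e2
      rw [hG00, hG10, hG20] at e0
      rw [hG01, hG11, hG21] at e1
      rw [hG02, hG12, hG22] at e2
      have hra : B r a = 0 := by
        simp only [hr, map_add, map_smul, LinearMap.add_apply, LinearMap.smul_apply,
          smul_eq_mul]
        rw [hca, hda]
        linear_combination e0
      have hrc : B r c = 0 := by
        simp only [hr, map_add, map_smul, LinearMap.add_apply, LinearMap.smul_apply,
          smul_eq_mul]
        rw [hdc]
        linear_combination e1
      have hrd : B r d = 0 := by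
        simp only [hr, map_add, map_smul, LinearMap.add_apply, LinearMap.smul_apply,
          smul_eq_mul]
        linear_combination e2
      have hrL : ∀ x ∈ Submodule.span F ({c, d} : Set V), B r x = 0 := by
        intro x hx
        obtain ⟨s, t, rfl⟩ := Submodule.mem_span_pair.mp hx
        simp only [map_add, map_smul, smul_eq_mul]
        rw [hrc, hrd]
        ring
      have hrr : B r r = 0 := by
        nth_rewrite 2 [hr]
        simp only [map_add, map_smul, smul_eq_mul]
        rw [hra, hrc, hrd]
        ring
      have hρ00 : ρ 0 ≠ 0 := by
        intro h0
        have hrmem : r ∈ Submodule.span F ({c, d} : Set V) := by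
          rw [hr, h0, zero_smul, zero_add]
          exact Submodule.add_mem _ (Submodule.smul_mem _ _ hcL) (Submodule.smul_mem _ _ hdL)
        have hreq : ρ 1 • c + ρ 2 • d = 0 := by
          have := hanisL r hrmem (hrL r hrmem)
          rwa [hr, h0, zero_smul, zero_add] at this
        by_cases hρ2 : ρ 2 = 0
        · have hρ1 : ρ 1 = 0 := by
            rw [hρ2, zero_smul, add_zero] at hreq
            rcases smul_eq_zero.mp hreq with h' | h'
            · exact h'
            · exact absurd h' hc0
          exact hρ0 (by funext i; fin_cases i <;> simp [h0, hρ1, hρ2])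
        · have hd' : ρ 2 • d = (-(ρ 1)) • c := by
            rw [neg_smul]
            exact eq_neg_of_add_eq_zero_right hreq
          have : d = ((ρ 2)⁻¹ * (-(ρ 1))) • c := by
            rw [← smul_smul, ← hd', smul_smul, inv_mul_cancel₀ hρ2, one_smul]
          exact hindcd _ this
      set p₀ : V := a - (ρ 0)⁻¹ • r with hp₀
      have haval : a = p₀ + (ρ 0)⁻¹ • r := by rw [hp₀]; abel
      have hp₀L : p₀ ∈ Submodule.span F ({c, d} : Set V) := by
        have hpeq : p₀ = (-(ρ 1 / ρ 0)) • c + (-(ρ 2 / ρ 0)) • d := by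
          rw [hp₀, hr]
          match_scalars <;> field_simp <;> ring
        rw [hpeq]
        exact Submodule.add_mem _ (Submodule.smul_mem _ _ hcL) (Submodule.smul_mem _ _ hdL)
      have hrp₀ : B r p₀ = 0 := hrL p₀ hp₀L
      have hp₀r : B p₀ r = 0 := by
        have h' := hsymm.eq r p₀
        rw [← h', hrp₀]
      have hp₀0 : p₀ ≠ 0 := by
        intro h0
        apply ha
        have harr : a = (ρ 0)⁻¹ • r := by
          have := hp₀ ▸ h0
          rwa [sub_eq_zero] at this
        rw [harr]
        simp only [map_smul, LinearMap.smul_apply, smul_eq_mul]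
        rw [hrr]
        ring
      have hQa : B a a = B p₀ p₀ := by
        rw [haval]
        simp only [map_add, map_smul, LinearMap.add_apply, LinearMap.smul_apply, smul_eq_mul]
        rw [hrr, hrp₀, hp₀r]
        ring
      have hBax : ∀ x ∈ Submodule.span F ({c, d} : Set V), B a x = B p₀ x := by
        intro x hx
        rw [haval]
        simp only [map_add, LinearMap.add_apply, LinearMap.smul_apply, map_smul, smul_eq_mul]
        rw [hrL x hx]
        ring
      rcases keyz p₀ with hk | hk
      · have hns := nonsquare_of_pair_elliptic B hsymm hcd hp₀L (memL 1) hp₀0 hk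
        refine finish 1 one_ne_zero ?_
        rw [hBax _ (memL 1), hQa]
        exact hns
      · have hns := nonsquare_of_pair_elliptic B hsymm hcd hp₀L (memL (-1)) hp₀0 hk
        refine finish (-1) (neg_ne_zero.mpr one_ne_zero) ?_
        rw [hBax _ (memL (-1)), hQa]
        exact hns
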